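/- As formal power series in q, the generating function for the number a_d(n) of partitions of n into distinct parts with odd minimal excludant satisfies Σ_{n≥0} a_d(n) q^n = (−q; q)_∞ · Σ_{n≥0} (−1)^n q^{n(n+1)/2} / (−q; q)_n. -/

import Mathlib

open PowerSeries Finset

/-- The set of partitions of `n` into distinct parts, encoded as finsets of
positive integers summing to `n`. -/
def Dpart (n : ℕ) : Finset (Finset ℕ) :=
  (Finset.Icc 1 n).powerset.filter (fun S => S.sum id = n)

/-- The minimal excludant: the least positive integer not occurring as a part. -/
noncomputable def pmex (S : Finset ℕ) : ℕ := sInf {m : ℕ | 0 < m ∧ m ∉ S}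

/-- `a_d(n)`: the number of distinct-parts partitions of `n` with odd minimal excludant. -/
noncomputable def adist (n : ℕ) : ℕ := ((Dpart n).filter (fun S => Odd (pmex S))).card

/-- `(−q;q)_∞ = Π_{k ≥ 1} (1 + q^k)` as a formal power series over `ℚ`. -/
noncomputable def prodDistinct : PowerSeries ℚ :=
  PowerSeries.mk fun n =>
    coeff n (∏ k ∈ Finset.range (n + 1), (1 + (X : PowerSeries ℚ) ^ (k + 1)))

/-- `Σ_{n ≥ 0} (−1)^n q^{n(n+1)/2} / (−q;q)_n` as a formal power series over `ℚ`. -/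
noncomputable def falseTheta : PowerSeries ℚ :=
  PowerSeries.mk fun N =>
    coeff N (∑ n ∈ Finset.range (N + 2),
      ((-1 : PowerSeries ℚ)) ^ n * (X : PowerSeries ℚ) ^ (n * (n + 1) / 2) *
        (∏ k ∈ Finset.range n, (1 + (X : PowerSeries ℚ) ^ (k + 1)))⁻¹)

/-! ### Auxiliary definitions -/

/-- Finite product `Π_{k<M} (1+X^{k+1})`. -/
noncomputable def PP (M : ℕ) : PowerSeries ℚ :=
  ∏ k ∈ Finset.range M, (1 + (X : PowerSeries ℚ) ^ (k + 1))

/-- Partial product over an interval. -/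
noncomputable def QQ (a b : ℕ) : PowerSeries ℚ :=
  ∏ k ∈ Finset.Ico a b, (1 + (X : PowerSeries ℚ) ^ (k + 1))

/-- The `n`-th term of the false theta sum. -/
noncomputable def trm (n : ℕ) : PowerSeries ℚ :=
  ((-1 : PowerSeries ℚ)) ^ n * (X : PowerSeries ℚ) ^ (n * (n + 1) / 2) * (PP n)⁻¹

/-- Partial sums of the false theta series. -/
noncomputable def SS (M : ℕ) : PowerSeries ℚ := ∑ n ∈ Finset.range M, trm n

/-! ### Stabilization lemmas -/

lemma coeff_PP_stable {N M : ℕ} (h : N < M) :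
    coeff N (PP M) = coeff N (PP (N + 1)) := by
  induction M with
  | zero => omega
  | succ M ih =>
    rcases Nat.lt_or_ge N M with hM | hM
    · rw [← ih hM]
      show coeff N (PP (M + 1)) = _
      unfold PP
      rw [Finset.prod_range_succ, mul_add, mul_one, map_add,
        PowerSeries.coeff_mul_X_pow', if_neg (by omega), add_zero]
    · have : M = N := by omega
      subst this; rfl

lemma coeff_trm_zero {N n : ℕ} (h : N < n) : coeff N (trm n) = 0 := by
  have h1 : n ≤ n * (n + 1) / 2 := by
    rw [Nat.le_div_iff_mul_le (by norm_num)]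
    nlinarith
  unfold trm
  rw [show ((-1 : PowerSeries ℚ)) ^ n * (X : PowerSeries ℚ) ^ (n * (n + 1) / 2) * (PP n)⁻¹
      = (((-1 : PowerSeries ℚ)) ^ n * (PP n)⁻¹) * (X : PowerSeries ℚ) ^ (n * (n + 1) / 2) by
    ring]
  rw [PowerSeries.coeff_mul_X_pow', if_neg (by omega)]

lemma coeff_SS_stable {N M : ℕ} (h : N < M) :
    coeff N (SS M) = coeff N (SS (N + 1)) := by
  induction M with
  | zero => omega
  | succ M ih =>
    rcases Nat.lt_or_ge N M with hM | hM
    · rw [← ih hM]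
      show coeff N (SS (M + 1)) = _
      unfold SS
      rw [Finset.sum_range_succ, map_add, coeff_trm_zero hM, add_zero]
    · have : M = N := by omega
      subst this; rfl

lemma coeff_prodDistinct {N M : ℕ} (h : N < M) :
    coeff N prodDistinct = coeff N (PP M) := by
  rw [prodDistinct, coeff_mk]
  show coeff N (PP (N + 1)) = _
  rw [coeff_PP_stable h]

lemma coeff_falseTheta {N M : ℕ} (h : N < M) :
    coeff N falseTheta = coeff N (SS M) := by
  rw [falseTheta, coeff_mk]
  show coeff N (SS (N + 2)) = _
  rw [coeff_SS_stable (show N < N + 2 by omega), coeff_SS_stable h]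

/-! ### Algebraic manipulation -/

lemma constCoeff_PP (n : ℕ) : constantCoeff (PP n) = 1 := by
  unfold PP
  rw [map_prod]
  apply Finset.prod_eq_one
  intro k _
  simp

lemma PP_mul_inv {n M : ℕ} (h : n ≤ M) : PP M * (PP n)⁻¹ = QQ n M := by
  have hP : PP M = PP n * QQ n M := by
    unfold PP QQ
    rw [Finset.range_eq_Ico, ← Finset.prod_Ico_consecutive _ (Nat.zero_le n) h, Finset.range_eq_Ico]
  rw [hP, mul_comm (PP n), mul_assoc,
    PowerSeries.mul_inv_cancel _ (by rw [constCoeff_PP]; norm_num), mul_one]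

lemma T_even (j : ℕ) : (2 * j) * (2 * j + 1) / 2 = j * (2 * j + 1) := by
  rw [show 2 * j * (2 * j + 1) = 2 * (j * (2 * j + 1)) by ring,
    Nat.mul_div_cancel_left _ two_pos]

lemma T_odd (j : ℕ) : (2 * j + 1) * ((2 * j + 1) + 1) / 2 = j * (2 * j + 1) + (2 * j + 1) := by
  rw [show (2 * j + 1) * ((2 * j + 1) + 1) = 2 * (j * (2 * j + 1) + (2 * j + 1)) by ring,
    Nat.mul_div_cancel_left _ two_pos]

lemma sum_pair {M : Type*} [AddCommMonoid M] (f : ℕ → M) (L : ℕ) :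
    ∑ n ∈ Finset.range (2 * L), f n = ∑ j ∈ Finset.range L, (f (2 * j) + f (2 * j + 1)) := by
  induction L with
  | zero => simp
  | succ L ih =>
    rw [Finset.sum_range_succ, ← ih, show 2 * (L + 1) = 2 * L + 1 + 1 by ring,
      Finset.sum_range_succ, Finset.sum_range_succ, add_assoc]

lemma PP_mul_SS (L : ℕ) :
    PP (2 * L) * SS (2 * L) = ∑ j ∈ Finset.range L,
      (X : PowerSeries ℚ) ^ ((2 * j) * (2 * j + 1) / 2) * QQ (2 * j + 1) (2 * L) := by
  unfold SS
  rw [Finset.mul_sum, sum_pair (fun n => PP (2 * L) * trm n) L]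
  apply Finset.sum_congr rfl
  intro j hj
  have hj' : j < L := Finset.mem_range.mp hj
  have key : ∀ n ≤ 2 * L, PP (2 * L) * trm n
      = ((-1 : PowerSeries ℚ)) ^ n * (X : PowerSeries ℚ) ^ (n * (n + 1) / 2) * QQ n (2 * L) := by
    intro n hn
    unfold trm
    rw [show PP (2 * L) * ((-1 : PowerSeries ℚ) ^ n * (X : PowerSeries ℚ) ^ (n * (n + 1) / 2)
        * (PP n)⁻¹) = ((-1 : PowerSeries ℚ)) ^ n * (X : PowerSeries ℚ) ^ (n * (n + 1) / 2) *
        (PP (2 * L) * (PP n)⁻¹) by ring, PP_mul_inv hn]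
  rw [key (2 * j) (by omega), key (2 * j + 1) (by omega)]
  have he : ((-1 : PowerSeries ℚ)) ^ (2 * j) = 1 := Even.neg_one_pow ⟨j, by ring⟩
  have ho : ((-1 : PowerSeries ℚ)) ^ (2 * j + 1) = -1 := Odd.neg_one_pow ⟨j, by ring⟩
  have hQ : QQ (2 * j) (2 * L) = (1 + (X : PowerSeries ℚ) ^ (2 * j + 1)) * QQ (2 * j + 1) (2 * L) := by
    unfold QQ
    exact Finset.prod_eq_prod_Ico_succ_bot (by omega) _
  rw [he, ho, hQ, T_even, T_odd, pow_add]
  ring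

/-! ### Coefficients of products as subset counts -/

lemma coeff_prod_one_add (s : Finset ℕ) (m : ℕ) :
    coeff m (∏ i ∈ s, (1 + (X : PowerSeries ℚ) ^ i)) =
      ((s.powerset.filter (fun t => t.sum id = m)).card : ℚ) := by
  have h1 : ∏ i ∈ s, (1 + (X : PowerSeries ℚ) ^ i)
      = ∑ t ∈ s.powerset, (X : PowerSeries ℚ) ^ (t.sum id) := by
    calc ∏ i ∈ s, (1 + (X : PowerSeries ℚ) ^ i)
        = ∏ i ∈ s, ((X : PowerSeries ℚ) ^ i + 1) := by
          apply Finset.prod_congr rfl; intro i _; ring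
      _ = ∑ t ∈ s.powerset, (∏ i ∈ t, (X : PowerSeries ℚ) ^ i) * ∏ i ∈ s \ t, 1 := by
          rw [Finset.prod_add]
      _ = ∑ t ∈ s.powerset, (X : PowerSeries ℚ) ^ (t.sum id) := by
          apply Finset.sum_congr rfl; intro t _
          rw [Finset.prod_const_one, mul_one, Finset.prod_pow_eq_pow_sum]
          rfl
  rw [h1, map_sum]
  rw [show (∑ t ∈ s.powerset, coeff m ((X : PowerSeries ℚ) ^ (t.sum id)))
      = ∑ t ∈ s.powerset, if t.sum id = m then (1 : ℚ) else 0 by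
    apply Finset.sum_congr rfl; intro t _
    rw [PowerSeries.coeff_X_pow]
    exact if_congr eq_comm rfl rfl]
  rw [Finset.sum_boole]

lemma filter_sum_eq_bound (a m : ℕ) {b : ℕ} (hb : m < b) :
    (Finset.Ico a b).powerset.filter (fun t => t.sum id = m)
      = (Finset.Ico a (m + 1)).powerset.filter (fun t => t.sum id = m) := by
  ext t
  simp only [Finset.mem_filter, Finset.mem_powerset]
  constructor
  · rintro ⟨hsub, hsum⟩
    refine ⟨fun x hx => ?_, hsum⟩
    have hx' := hsub hx
    rw [Finset.mem_Ico] at hx' ⊢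
    have hxle : x ≤ t.sum id := Finset.single_le_sum (fun i _ => Nat.zero_le (id i)) hx
    omega
  · rintro ⟨hsub, hsum⟩
    refine ⟨fun x hx => ?_, hsum⟩
    have hx' := hsub hx
    rw [Finset.mem_Ico] at hx' ⊢
    omega

lemma coeff_QQ (a b m : ℕ) :
    coeff m (QQ a b) =
      (((Finset.Ico (a + 1) (b + 1)).powerset.filter (fun t => t.sum id = m)).card : ℚ) := by
  have h : QQ a b = ∏ i ∈ Finset.Ico (a + 1) (b + 1), (1 + (X : PowerSeries ℚ) ^ i) := by
    unfold QQ
    rw [show Finset.Ico (a + 1) (b + 1) = (Finset.Ico a b).image (· + 1) by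
      rw [Finset.image_add_right_Ico]]
    rw [Finset.prod_image (fun x _ y _ h => by omega)]
  rw [h, coeff_prod_one_add]

/-! ### pmex lemmas -/

lemma pmex_subset {S : Finset ℕ} {j : ℕ} (h : pmex S = 2 * j + 1) :
    Finset.Icc 1 (2 * j) ⊆ S := by
  intro i hi
  rw [Finset.mem_Icc] at hi
  by_contra hiS
  have hlt : i < sInf {m : ℕ | 0 < m ∧ m ∉ S} := by
    unfold pmex at h; omega
  exact Nat.notMem_of_lt_sInf hlt ⟨by omega, hiS⟩

lemma pmex_union (j : ℕ) (t : Finset ℕ) (ht : ∀ x ∈ t, 2 * j + 2 ≤ x) :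
    pmex (Finset.Icc 1 (2 * j) ∪ t) = 2 * j + 1 := by
  have hmem : (2 * j + 1) ∈ {m : ℕ | 0 < m ∧ m ∉ Finset.Icc 1 (2 * j) ∪ t} := by
    refine ⟨by omega, ?_⟩
    intro hm
    rcases Finset.mem_union.mp hm with h | h
    · rw [Finset.mem_Icc] at h; omega
    · have := ht _ h; omega
  unfold pmex
  apply le_antisymm (Nat.sInf_le hmem)
  by_contra hlt
  push_neg at hlt
  have h2 := Nat.sInf_mem (⟨_, hmem⟩ : {m : ℕ | 0 < m ∧ m ∉ Finset.Icc 1 (2 * j) ∪ t}.Nonempty)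
  obtain ⟨hpos, hnot⟩ := h2
  exact hnot (Finset.mem_union_left _ (Finset.mem_Icc.mpr ⟨hpos, by omega⟩))

lemma sum_Icc_id (j : ℕ) : (Finset.Icc 1 (2 * j)).sum id = j * (2 * j + 1) := by
  have h : (∑ i ∈ Finset.range (2 * j + 1), i) * 2 = (2 * j + 1) * (2 * j) :=
    Finset.sum_range_id_mul_two (2 * j + 1)
  have h2 : (∑ i ∈ Finset.range (2 * j + 1), i)
      = (0 : ℕ) + ∑ i ∈ Finset.Ico 1 (2 * j + 1), i := by
    rw [Finset.range_eq_Ico]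
    exact Finset.sum_eq_sum_Ico_succ_bot (by omega) _
  have h3 : (Finset.Icc 1 (2 * j)).sum id = ∑ i ∈ Finset.Ico 1 (2 * j + 1), i := by
    rw [Finset.Ico_add_one_right_eq_Icc]; rfl
  have h4 : (2 * j + 1) * (2 * j) = (j * (2 * j + 1)) * 2 := by ring
  omega

/-! ### Counting partitions with a prescribed mex -/

lemma mem_Dpart {N : ℕ} {S : Finset ℕ} :
    S ∈ Dpart N ↔ S ⊆ Finset.Icc 1 N ∧ S.sum id = N := by
  unfold Dpart
  rw [Finset.mem_filter, Finset.mem_powerset]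

lemma card_mex_zero (N j : ℕ) (hT : N < j * (2 * j + 1)) :
    ((Dpart N).filter (fun S => pmex S = 2 * j + 1)).card = 0 := by
  rw [Finset.card_eq_zero, Finset.filter_eq_empty_iff]
  intro S hS hmex
  obtain ⟨hsub, hsum⟩ := mem_Dpart.mp hS
  have h2 : (Finset.Icc 1 (2 * j)).sum id ≤ S.sum id :=
    Finset.sum_le_sum_of_subset (pmex_subset hmex)
  rw [sum_Icc_id, hsum] at h2
  omega

lemma card_mex_eq (N j : ℕ) (hT : j * (2 * j + 1) ≤ N) :
    ((Dpart N).filter (fun S => pmex S = 2 * j + 1)).card =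
    ((Finset.Ico (2 * j + 2) (N + 1)).powerset.filter
      (fun t => t.sum id = N - j * (2 * j + 1))).card := by
  apply Finset.card_bij' (fun S _ => S \ Finset.Icc 1 (2 * j))
    (fun t _ => Finset.Icc 1 (2 * j) ∪ t)
  · -- forward map lands in target
    intro S hS
    rw [Finset.mem_filter] at hS
    obtain ⟨hD, hmex⟩ := hS
    obtain ⟨hsub, hsum⟩ := mem_Dpart.mp hD
    have hB : Finset.Icc 1 (2 * j) ⊆ S := pmex_subset hmex
    have hnotS : (2 * j + 1) ∉ S := by
      have hne : {m : ℕ | 0 < m ∧ m ∉ S}.Nonempty := by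
        refine ⟨N + 1, by omega, fun hc => ?_⟩
        have := hsub hc
        rw [Finset.mem_Icc] at this; omega
      have := Nat.sInf_mem hne
      rw [show sInf {m : ℕ | 0 < m ∧ m ∉ S} = pmex S from rfl, hmex] at this
      exact this.2
    rw [Finset.mem_filter, Finset.mem_powerset]
    constructor
    · intro x hx
      rw [Finset.mem_sdiff] at hx
      obtain ⟨hxS, hxB⟩ := hx
      have hx1 := hsub hxS
      rw [Finset.mem_Icc] at hx1
      rw [Finset.mem_Icc] at hxB
      rw [Finset.mem_Ico]
      have : x ≠ 2 * j + 1 := fun h => hnotS (h ▸ hxS)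
      omega
    · have hss := Finset.sum_sdiff (f := id) hB
      rw [hsum, sum_Icc_id] at hss
      set T := j * (2 * j + 1) with hTdef
      show ∑ x ∈ S \ Finset.Icc 1 (2 * j), id x = N - T
      omega
  · -- backward map lands in source
    intro t ht
    rw [Finset.mem_filter, Finset.mem_powerset] at ht
    obtain ⟨hsub, hsum⟩ := ht
    have h2j : 2 * j ≤ j * (2 * j + 1) := by
      rcases Nat.eq_zero_or_pos j with h0 | h0
      · simp [h0]
      · have hjj : j ≤ j * j := Nat.le_mul_of_pos_left j h0
        nlinarith
    have hdisj : Disjoint (Finset.Icc 1 (2 * j)) t := by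
      rw [Finset.disjoint_left]
      intro x hx hxt
      rw [Finset.mem_Icc] at hx
      have := hsub hxt
      rw [Finset.mem_Ico] at this
      omega
    rw [Finset.mem_filter]
    constructor
    · rw [mem_Dpart]
      constructor
      · intro x hx
        rcases Finset.mem_union.mp hx with h | h
        · rw [Finset.mem_Icc] at h ⊢; omega
        · have := hsub h
          rw [Finset.mem_Ico] at this
          rw [Finset.mem_Icc]
          omega
      · rw [Finset.sum_union hdisj, sum_Icc_id, hsum]
        omega
    · apply pmex_union
      intro x hx
      have := hsub hx
      rw [Finset.mem_Ico] at this
      omega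
  · -- left inverse
    intro S hS
    rw [Finset.mem_filter] at hS
    exact Finset.union_sdiff_of_subset (pmex_subset hS.2)
  · -- right inverse
    intro t ht
    rw [Finset.mem_filter, Finset.mem_powerset] at ht
    apply Finset.union_sdiff_cancel_left
    rw [Finset.disjoint_left]
    intro x hx hxt
    rw [Finset.mem_Icc] at hx
    have := ht.1 hxt
    rw [Finset.mem_Ico] at this
    omega

/-! ### Decomposing `adist` by mex value -/

lemma adist_eq_sum (N L : ℕ) (hL : N + 2 ≤ 2 * L) :
    adist N = ∑ j ∈ Finset.range L,
      ((Dpart N).filter (fun S => pmex S = 2 * j + 1)).card := by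
  unfold adist
  rw [Finset.card_filter]
  have hc : ∀ j : ℕ, ((Dpart N).filter (fun S => pmex S = 2 * j + 1)).card
      = ∑ S ∈ Dpart N, if pmex S = 2 * j + 1 then 1 else 0 := fun j =>
    Finset.card_filter _ _
  simp_rw [hc]
  rw [Finset.sum_comm]
  apply Finset.sum_congr rfl
  intro S hS
  obtain ⟨hsub, hsum⟩ := mem_Dpart.mp hS
  have hle : pmex S ≤ N + 1 := by
    apply Nat.sInf_le
    refine ⟨by omega, fun hc => ?_⟩
    have := hsub hc
    rw [Finset.mem_Icc] at this; omega
  by_cases hodd : Odd (pmex S)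
  · obtain ⟨k, hk⟩ := hodd
    rw [if_pos ⟨k, hk⟩]
    have hkL : k < L := by omega
    rw [Finset.sum_eq_single_of_mem k (Finset.mem_range.mpr hkL)]
    · rw [if_pos (by omega)]
    · intro j _ hj
      rw [if_neg (by omega)]
  · rw [if_neg hodd]
    apply (Finset.sum_eq_zero ?_).symm
    intro j _
    rw [if_neg]
    intro h
    exact hodd ⟨j, by omega⟩

/-! ### Per-index identification of coefficients with counts -/

lemma coeff_term_card (N L j : ℕ) (hN : N < 2 * L) (hj : j < L) :
    coeff N ((X : PowerSeries ℚ) ^ ((2 * j) * (2 * j + 1) / 2) * QQ (2 * j + 1) (2 * L))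
      = (((Dpart N).filter (fun S => pmex S = 2 * j + 1)).card : ℚ) := by
  rw [mul_comm, PowerSeries.coeff_mul_X_pow', T_even]
  by_cases hT : j * (2 * j + 1) ≤ N
  · rw [if_pos hT, coeff_QQ, card_mex_eq N j hT]
    norm_cast
    have hb1 : N - j * (2 * j + 1) < 2 * L + 1 :=
      Nat.lt_succ_of_le ((Nat.sub_le _ _).trans (by omega))
    have hb2 : N - j * (2 * j + 1) < N + 1 :=
      Nat.lt_succ_of_le (Nat.sub_le _ _)
    rw [show (2 * j + 1) + 1 = 2 * j + 2 by omega,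
      filter_sum_eq_bound (2 * j + 2) (N - j * (2 * j + 1)) hb1,
      filter_sum_eq_bound (2 * j + 2) (N - j * (2 * j + 1)) hb2]
  · rw [if_neg hT, card_mex_zero N j (by omega)]
    simp

/-- `Σ_{n≥0} a_d(n) q^n = (−q;q)_∞ · Σ_{n≥0} (−1)^n q^{n(n+1)/2} / (−q;q)_n`. -/
theorem stmt_7 : (PowerSeries.mk fun n => (adist n : ℚ)) = prodDistinct * falseTheta := by
  ext N
  rw [coeff_mk]
  have hcoeff : coeff N (prodDistinct * falseTheta)
      = coeff N (PP (2 * (N + 2)) * SS (2 * (N + 2))) := by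
    rw [PowerSeries.coeff_mul, PowerSeries.coeff_mul]
    apply Finset.sum_congr rfl
    intro p hp
    rw [Finset.HasAntidiagonal.mem_antidiagonal] at hp
    rw [coeff_prodDistinct (show p.1 < 2 * (N + 2) by omega),
      coeff_falseTheta (show p.2 < 2 * (N + 2) by omega)]
  rw [hcoeff, PP_mul_SS (N + 2), map_sum, adist_eq_sum N (N + 2) (by omega)]
  push_cast
  apply Finset.sum_congr rfl
  intro j hj
  exact (coeff_term_card N (N + 2) j (by omega) (Finset.mem_range.mp hj)).symm
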